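/- Let m ≥ 1, let λ₁, …, λ_m be positive real numbers that are linearly independent over ℚ, and let τ > 0. Then the set { (e^{iλ₁z}, …, e^{iλ_m z}) : z ∈ ℂ, Im z = τ } is dense in the real torus T = { v ∈ ℂᵐ : |v_k| = e^{-λ_k τ} for all k }. -/

import Mathlib

open Complex MeasureTheory Submodule Set

namespace KroneckerAux

lemma circle_exp_nsmul (t : ℝ) (k : ℕ) : Circle.exp t ^ k = Circle.exp (k * t) := by
  induction k with
  | zero => simp
  | succ n ih =>
      rw [pow_succ, ih, ← Circle.exp_add]
      push_cast
      ring_nf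

lemma circle_exp_zpow (t : ℝ) (n : ℤ) : Circle.exp t ^ n = Circle.exp (n * t) := by
  obtain ⟨k, rfl | rfl⟩ := n.eq_nat_or_neg
  · rw [zpow_natCast, circle_exp_nsmul]; norm_num
  · rw [zpow_neg, zpow_natCast, circle_exp_nsmul, ← Circle.exp_neg]
    norm_num

lemma circle_exp_sum {ι : Type*} (s : Finset ι) (g : ι → ℝ) :
    ∏ i ∈ s, Circle.exp (g i) = Circle.exp (∑ i ∈ s, g i) := by
  classical
  induction s using Finset.cons_induction with
  | empty => simp
  | cons a s ha ih => rw [Finset.prod_cons, Finset.sum_cons, ih, Circle.exp_add]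

variable {m : ℕ}

/-- The character of the torus `(Fin m → Circle)` attached to `n : Fin m → ℤ`. -/
noncomputable def tchar (n : Fin m → ℤ) : C(Fin m → Circle, ℂ) where
  toFun u := ∏ k, ((u k ^ n k : Circle) : ℂ)
  continuous_toFun := by
    refine continuous_finset_prod _ fun k _ => ?_
    have h1 : Continuous fun u : Fin m → Circle => u k := continuous_apply k
    have h2 : Continuous fun z : Circle => z ^ n k := continuous_zpow (n k)
    exact continuous_subtype_val.comp (h2.comp h1)

lemma tchar_apply (n : Fin m → ℤ) (u : Fin m → Circle) :
    tchar n u = ∏ k, ((u k ^ n k : Circle) : ℂ) := rfl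

lemma tchar_zero : tchar (0 : Fin m → ℤ) = 1 := by
  ext u; simp [tchar_apply]

lemma tchar_add (a b : Fin m → ℤ) : tchar (a + b) = tchar a * tchar b := by
  ext u
  simp only [tchar_apply, ContinuousMap.mul_apply, Pi.add_apply, zpow_add, Circle.coe_mul]
  rw [Finset.prod_mul_distrib]

lemma tchar_mul_apply (n : Fin m → ℤ) (a b : Fin m → Circle) :
    tchar n (a * b) = tchar n a * tchar n b := by
  simp only [tchar_apply, Pi.mul_apply, mul_zpow, Circle.coe_mul]
  rw [Finset.prod_mul_distrib]

lemma tchar_neg (n : Fin m → ℤ) : tchar (-n) = star (tchar n) := by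
  ext u
  simp only [tchar_apply, ContinuousMap.star_apply, Pi.neg_apply]
  rw [star_prod]
  refine Finset.prod_congr rfl fun k _ => ?_
  rw [zpow_neg, Circle.coe_inv_eq_conj]
  rfl

/-- The star subalgebra generated by the characters. -/
noncomputable def tcharSubalgebra : StarSubalgebra ℂ C(Fin m → Circle, ℂ) where
  toSubalgebra := Algebra.adjoin ℂ (Set.range tchar)
  star_mem' := by
    show Algebra.adjoin ℂ (Set.range (tchar (m := m))) ≤
      star (Algebra.adjoin ℂ (Set.range (tchar (m := m))))
    refine Algebra.adjoin_le ?_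
    rintro - ⟨n, rfl⟩
    exact Algebra.subset_adjoin ⟨-n, (tchar_neg n).symm ▸ rfl⟩

lemma tcharSubalgebra_coe :
    Subalgebra.toSubmodule (tcharSubalgebra (m := m)).toSubalgebra
      = span ℂ (Set.range tchar) := by
  apply Algebra.adjoin_eq_span_of_subset
  refine Subset.trans ?_ Submodule.subset_span
  intro x hx
  refine Submonoid.closure_induction (fun _ => id) ⟨0, ?_⟩ ?_ hx
  · exact tchar_zero
  · rintro - - - - ⟨a, rfl⟩ ⟨b, rfl⟩
    exact ⟨a + b, tchar_add a b⟩

lemma tcharSubalgebra_separatesPoints : (tcharSubalgebra (m := m)).SeparatesPoints := by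
  intro u v huv
  obtain ⟨k, hk⟩ : ∃ k, u k ≠ v k := by
    by_contra h
    push_neg at h
    exact huv (funext h)
  refine ⟨_, ⟨tchar (Pi.single k 1), Algebra.subset_adjoin ⟨_, rfl⟩, rfl⟩, ?_⟩
  have hval : ∀ w : Fin m → Circle, tchar (Pi.single k 1) w = (w k : ℂ) := by
    intro w
    rw [tchar_apply, Finset.prod_eq_single k]
    · simp
    · intro j _ hj; simp [Pi.single_eq_of_ne hj]
    · simp
  simp only [hval]
  exact fun h => hk (Circle.coe_injective h)

lemma span_tchar_closure_eq_top :
    (span ℂ (Set.range (tchar (m := m)))).topologicalClosure = ⊤ := by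
  rw [← tcharSubalgebra_coe]
  exact congr_arg (Subalgebra.toSubmodule <| StarSubalgebra.toSubalgebra ·)
    (ContinuousMap.starSubalgebra_topologicalClosure_eq_top_of_separatesPoints _
      tcharSubalgebra_separatesPoints)

/-- A character-type vanishing lemma: if `f` transforms by a nontrivial constant under a
translation, its integral against a left-invariant measure vanishes. -/
lemma integral_eq_zero_of_shift {G : Type*} [Group G] [TopologicalSpace G]
    [IsTopologicalGroup G] [MeasurableSpace G] [BorelSpace G]
    (μ : Measure G) [μ.IsMulLeftInvariant] (f : G → ℂ) (c : ℂ) (h : G)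
    (hc : c ≠ 1) (hf : ∀ x, f (h * x) = c * f x) : ∫ x, f x ∂μ = 0 := by
  have h1 : ∫ x, f (h * x) ∂μ = ∫ x, f x ∂μ := integral_mul_left_eq_self f h
  simp_rw [hf, integral_const_mul] at h1
  have h2 : (c - 1) * ∫ x, f x ∂μ = 0 := by linear_combination h1
  rcases mul_eq_zero.mp h2 with h' | h'
  · exact absurd (sub_eq_zero.mp h') hc
  · exact h'

lemma integrable_of_continuous {X E : Type*} [TopologicalSpace X] [CompactSpace X]
    [MeasurableSpace X] [BorelSpace X] [T2Space X] [NormedAddCommGroup E]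
    (μ : Measure X) [IsFiniteMeasure μ]
    {f : X → E} (hf : Continuous f) : Integrable f μ := by
  refine hf.integrable_of_hasCompactSupport ?_
  exact IsCompact.of_isClosed_subset isCompact_univ (isClosed_tsupport f) (subset_univ _)

end KroneckerAux

open KroneckerAux

/-- Kronecker's theorem: if `lam` is `ℚ`-linearly independent, the one-parameter subgroup
`x ↦ (exp (i lam k x))_k` is dense in the torus. -/
theorem kronecker_dense {m : ℕ} (lam : Fin m → ℝ) (hli : LinearIndependent ℚ lam) :
    Dense (Set.range fun x : ℝ => fun k => Circle.exp (lam k * x)) := by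
  classical
  set φ : ℝ → (Fin m → Circle) := fun x k => Circle.exp (lam k * x) with hφ
  have hφ_add : ∀ x y, φ (x + y) = φ x * φ y := by
    intro x y; funext k
    simp [φ, mul_add, Circle.exp_add]
  set S : Subgroup (Fin m → Circle) :=
    { carrier := Set.range φ
      one_mem' := ⟨0, by funext k; simp [φ]⟩
      mul_mem' := by rintro - - ⟨x, rfl⟩ ⟨y, rfl⟩; exact ⟨x + y, hφ_add x y⟩
      inv_mem' := by
        rintro - ⟨x, rfl⟩
        refine ⟨-x, ?_⟩
        funext k
        simp [φ] } with hS
  set H := S.topologicalClosure with hH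
  intro u
  by_contra hu
  have huH : u ∉ (H : Set (Fin m → Circle)) := hu
  -- nonzero integer combinations of lam are nonzero
  have hcomb : ∀ n : Fin m → ℤ, n ≠ 0 → (∑ k, (n k : ℝ) * lam k) ≠ 0 := by
    intro n hn h0
    apply hn
    funext k
    have h1 : ∑ i, ((n i : ℚ) • lam i) = ∑ k, (n k : ℝ) * lam k := by
      refine Finset.sum_congr rfl fun i _ => ?_
      rw [Rat.smul_def]; push_cast; ring
    have := Fintype.linearIndependent_iff.mp hli (fun k => (n k : ℚ)) (by rw [h1, h0]) k
    exact_mod_cast this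
  -- measure-theoretic setup
  borelize (Fin m → Circle)
  set μT : Measure (Fin m → Circle) :=
    Measure.haarMeasure (⊤ : TopologicalSpace.PositiveCompacts (Fin m → Circle)) with hμT
  haveI : IsProbabilityMeasure μT := by
    constructor
    have := Measure.haarMeasure_self
      (K₀ := (⊤ : TopologicalSpace.PositiveCompacts (Fin m → Circle)))
    rwa [TopologicalSpace.PositiveCompacts.coe_top] at this
  haveI : CompactSpace H := isCompact_iff_compactSpace.mp
    S.isClosed_topologicalClosure.isCompact
  borelize ↥H
  set μH : Measure H := Measure.haarMeasure (⊤ : TopologicalSpace.PositiveCompacts H) with hμH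
  haveI : IsProbabilityMeasure μH := by
    constructor
    have := Measure.haarMeasure_self (K₀ := (⊤ : TopologicalSpace.PositiveCompacts H))
    rwa [TopologicalSpace.PositiveCompacts.coe_top] at this
  set IH : C(Fin m → Circle, ℂ) → ℂ := fun f => ∫ h : H, f ↑h ∂μH with hIHdef
  set IT : C(Fin m → Circle, ℂ) → ℂ := fun f => ∫ x, f x ∂μT with hITdef
  -- the two integrals agree on characters
  have hchar : ∀ n : Fin m → ℤ, IH (tchar n) = IT (tchar n) := by
    intro n
    by_cases hn : n = 0
    · subst hn
      rw [tchar_zero]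
      simp [hIHdef, hITdef]
    · obtain ⟨k₀, hk₀⟩ : ∃ k, n k ≠ 0 := by
        by_contra h; push_neg at h; exact hn (funext h)
      have hT0 : IT (tchar n) = 0 := by
        set h₀ : Fin m → Circle := Function.update 1 k₀ (Circle.exp (Real.pi / n k₀)) with hh₀
        refine integral_eq_zero_of_shift μT _ (tchar n h₀) h₀ ?_ fun x => tchar_mul_apply n h₀ x
        have hval : tchar n h₀ = -1 := by
          rw [tchar_apply, Finset.prod_eq_single k₀]
          · rw [hh₀, Function.update_self, circle_exp_zpow]
            have : (n k₀ : ℝ) * (Real.pi / n k₀) = Real.pi := by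
              field_simp
            rw [this, Circle.coe_exp]
            simpa using Complex.exp_pi_mul_I
          · intro j _ hj
            rw [hh₀, Function.update_of_ne hj]
            simp
          · simp
        rw [hval]
        norm_num
      have hH0 : IH (tchar n) = 0 := by
        set L := ∑ k, (n k : ℝ) * lam k with hL
        have hLne : L ≠ 0 := hcomb n hn
        set x₀ := Real.pi / L with hx₀
        have hmem : φ x₀ ∈ H := S.le_topologicalClosure ⟨x₀, rfl⟩
        have hval : tchar n (φ x₀) = -1 := by
          rw [tchar_apply]
          have hfac : ∀ k, ((φ x₀ k ^ n k : Circle) : ℂ)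
              = ((Circle.exp ((n k : ℝ) * (lam k * x₀)) : Circle) : ℂ) := by
            intro k
            rw [hφ]
            rw [circle_exp_zpow]
          simp_rw [hfac]
          have hsum : ∑ k, (n k : ℝ) * (lam k * x₀) = Real.pi := by
            have h2 : ∑ k, (n k : ℝ) * (lam k * x₀) = L * x₀ := by
              rw [hL, Finset.sum_mul]
              exact Finset.sum_congr rfl fun k _ => by ring
            rw [h2, hx₀]
            field_simp
          calc (∏ k, ((Circle.exp ((n k : ℝ) * (lam k * x₀)) : Circle) : ℂ))
              = ((Circle.exp (∑ k, (n k : ℝ) * (lam k * x₀)) : Circle) : ℂ) := by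
                rw [← circle_exp_sum]
                exact (map_prod Circle.coeHom
                  (fun k => Circle.exp ((n k : ℝ) * (lam k * x₀))) Finset.univ).symm
            _ = -1 := by
                rw [hsum, Circle.coe_exp]
                simpa using Complex.exp_pi_mul_I
        refine integral_eq_zero_of_shift μH _ (tchar n (φ x₀)) ⟨φ x₀, hmem⟩ ?_ ?_
        · rw [hval]; norm_num
        · intro x
          show tchar n ((⟨φ x₀, hmem⟩ * x : H) : Fin m → Circle) = _
          rw [Subgroup.coe_mul]
          exact tchar_mul_apply n _ _
      rw [hT0, hH0]
  -- integrability of continuous maps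
  have hintH : ∀ f : C(Fin m → Circle, ℂ), Integrable (fun h : H => f ↑h) μH := fun f =>
    integrable_of_continuous μH (f.continuous.comp continuous_subtype_val)
  have hintT : ∀ f : C(Fin m → Circle, ℂ), Integrable (fun x => f x) μT := fun f =>
    integrable_of_continuous μT f.continuous
  -- the two integrals agree on the span of the characters
  have hspan : ∀ f ∈ span ℂ (Set.range (tchar (m := m))), IH f = IT f := by
    intro f hf
    induction hf using Submodule.span_induction with
    | mem g hg => obtain ⟨n, rfl⟩ := hg; exact hchar n
    | zero => simp [hIHdef, hITdef]
    | add g₁ g₂ _ _ ih₁ ih₂ =>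
        have e1 : IH (g₁ + g₂) = IH g₁ + IH g₂ := by
          simp only [hIHdef, ContinuousMap.add_apply]
          exact integral_add (hintH g₁) (hintH g₂)
        have e2 : IT (g₁ + g₂) = IT g₁ + IT g₂ := by
          simp only [hITdef, ContinuousMap.add_apply]
          exact integral_add (hintT g₁) (hintT g₂)
        rw [e1, e2, ih₁, ih₂]
    | smul c g _ ih =>
        have e1 : IH (c • g) = c * IH g := by
          simp only [hIHdef, ContinuousMap.smul_apply, smul_eq_mul]
          exact integral_const_mul c _
        have e2 : IT (c • g) = c * IT g := by
          simp only [hITdef, ContinuousMap.smul_apply, smul_eq_mul]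
          exact integral_const_mul c _
        rw [e1, e2, ih]
  -- Urysohn function separating `u` from `H`
  obtain ⟨f, hf0, hf1, hfrange⟩ :=
    exists_continuous_zero_one_of_isClosed S.isClosed_topologicalClosure
      (isClosed_singleton (x := u)) (Set.disjoint_singleton_right.mpr huH)
  set fC : C(Fin m → Circle, ℂ) :=
    (⟨Complex.ofReal, Complex.continuous_ofReal⟩ : C(ℝ, ℂ)).comp f with hfC
  have hIH0 : IH fC = 0 := by
    have hz : ∀ h : H, fC (↑h : Fin m → Circle) = 0 := by
      intro h
      have : f (↑h : Fin m → Circle) = 0 := hf0 h.2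
      simp [hfC, this]
    rw [hIHdef]
    simp only [hz]
    exact integral_zero _ _
  have hpos : 0 < ∫ x, f x ∂μT := by
    rw [integral_pos_iff_support_of_nonneg (fun x => (hfrange x).1)
      (integrable_of_continuous μT f.continuous)]
    have hopen : IsOpen (Function.support f) := by
      have : Function.support f = f ⁻¹' ({0}ᶜ) := rfl
      rw [this]
      exact isClosed_singleton.isOpen_compl.preimage f.continuous
    refine hopen.measure_pos μT ⟨u, ?_⟩
    have : f u = 1 := hf1 (Set.mem_singleton u)
    simp [Function.mem_support, this]
  set δ : ℝ := ∫ x, f x ∂μT with hδ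
  have hITfC : IT fC = (δ : ℂ) := by
    rw [hITdef]
    simp only [hfC, ContinuousMap.comp_apply, ContinuousMap.coe_mk]
    exact integral_ofReal
  -- approximation of fC by an element of the span
  have hclos : fC ∈ closure ((span ℂ (Set.range (tchar (m := m)))) : Set _) := by
    have : fC ∈ (span ℂ (Set.range (tchar (m := m)))).topologicalClosure := by
      rw [span_tchar_closure_eq_top]; trivial
    exact this
  obtain ⟨g, hg, hdist⟩ := Metric.mem_closure_iff.mp hclos (δ / 3) (by positivity)
  obtain ⟨g, hgmem, rfl⟩ : ∃ g' ∈ span ℂ (Set.range (tchar (m := m))), g' = g := ⟨g, hg, rfl⟩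
  have hb : ∀ x, ‖fC x - g x‖ ≤ δ / 3 := by
    intro x
    calc ‖fC x - g x‖ = dist (fC x) (g x) := (dist_eq_norm _ _).symm
      _ ≤ dist fC g := ContinuousMap.dist_apply_le_dist x
      _ ≤ δ / 3 := le_of_lt hdist
  have b1 : ‖IH fC - IH g‖ ≤ δ / 3 := by
    rw [hIHdef]
    rw [← integral_sub (hintH fC) (hintH g)]
    have := norm_integral_le_of_norm_le_const (μ := μH)
      (f := fun h : H => fC ↑h - g ↑h) (C := δ / 3)
      (Filter.Eventually.of_forall fun h => hb ↑h)
    simpa using this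
  have b2 : ‖IT fC - IT g‖ ≤ δ / 3 := by
    rw [hITdef]
    rw [← integral_sub (hintT fC) (hintT g)]
    have := norm_integral_le_of_norm_le_const (μ := μT)
      (f := fun x => fC x - g x) (C := δ / 3)
      (Filter.Eventually.of_forall fun x => hb x)
    simpa using this
  have hgeq : IH g = IT g := hspan g hgmem
  have : ‖IT fC - IH fC‖ ≤ 2 * (δ / 3) := by
    calc ‖IT fC - IH fC‖ = ‖(IT fC - IT g) + (IT g - IH g) + (IH g - IH fC)‖ := by ring_nf
      _ ≤ ‖(IT fC - IT g) + (IT g - IH g)‖ + ‖IH g - IH fC‖ := norm_add_le _ _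
      _ ≤ ‖IT fC - IT g‖ + ‖IT g - IH g‖ + ‖IH g - IH fC‖ := by
          gcongr; exact norm_add_le _ _
      _ ≤ δ / 3 + 0 + δ / 3 := by
          refine add_le_add (add_le_add b2 ?_) ?_
          · rw [hgeq]; simp
          · rw [norm_sub_rev]; exact b1
      _ = 2 * (δ / 3) := by ring
  rw [hIH0, hITfC, sub_zero, Complex.norm_real, Real.norm_eq_abs, abs_of_pos hpos] at this
  linarith

set_option maxHeartbeats 1000000 in
theorem dense_line_image_in_torus {m : ℕ} (hm : 1 ≤ m)
    (lam : Fin m → ℝ) (hpos : ∀ i, 0 < lam i) (hli : LinearIndependent ℚ lam)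
    (τ : ℝ) (hτ : 0 < τ) :
    {v : Fin m → ℂ | ∀ k, ‖v k‖ = Real.exp (-(lam k) * τ)} ⊆
      closure {v : Fin m → ℂ |
        ∃ z : ℂ, z.im = τ ∧ v = fun k => Complex.exp (Complex.I * (lam k : ℂ) * z)} := by
  intro v hv
  rw [Metric.mem_closure_iff]
  intro ε hε
  -- lift v to the unit torus
  have hnorm : ∀ k, ‖v k * Real.exp (lam k * τ)‖ = 1 := by
    intro k
    rw [norm_mul, hv k]
    rw [Complex.norm_real, Real.norm_eq_abs, abs_of_pos (Real.exp_pos _), ← Real.exp_add]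
    norm_num
  set u : Fin m → Circle := fun k =>
    ⟨v k * Real.exp (lam k * τ), mem_sphere_zero_iff_norm.mpr (hnorm k)⟩ with hu
  have hdense := kronecker_dense lam hli u
  obtain ⟨w, ⟨x, rfl⟩, hwd⟩ := Metric.mem_closure_iff.mp hdense ε hε
  refine ⟨_, ⟨(x : ℂ) + τ * Complex.I, by simp, rfl⟩, ?_⟩
  rw [dist_pi_lt_iff hε]
  intro k
  have hval : Complex.exp (Complex.I * (lam k : ℂ) * ((x : ℂ) + τ * Complex.I))
      = ((Real.exp (-(lam k * τ)) : ℝ) : ℂ) * (Circle.exp (lam k * x) : ℂ) := by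
    have harg : Complex.I * (lam k : ℂ) * ((x : ℂ) + τ * Complex.I)
        = ((-(lam k * τ) : ℝ) : ℂ) + ((lam k * x : ℝ) : ℂ) * Complex.I := by
      push_cast
      linear_combination ((lam k : ℂ) * τ) * Complex.I_mul_I
    rw [harg, Complex.exp_add, ← Complex.ofReal_exp, Circle.coe_exp]
  have hvk : v k = ((Real.exp (-(lam k * τ)) : ℝ) : ℂ) * (u k : ℂ) := by
    show v k = ((Real.exp (-(lam k * τ)) : ℝ) : ℂ) * (v k * Real.exp (lam k * τ))
    rw [← mul_assoc, mul_comm ((Real.exp (-(lam k * τ)) : ℝ) : ℂ) (v k), mul_assoc,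
      ← Complex.ofReal_mul, ← Real.exp_add]
    norm_num
  rw [hvk, hval]
  have hfactor : dist (((Real.exp (-(lam k * τ)) : ℝ) : ℂ) * (u k : ℂ))
      (((Real.exp (-(lam k * τ)) : ℝ) : ℂ) * (Circle.exp (lam k * x) : ℂ))
      = Real.exp (-(lam k * τ)) * dist ((u k : ℂ)) ((Circle.exp (lam k * x) : ℂ)) := by
    rw [dist_eq_norm, ← mul_sub, norm_mul, Complex.norm_real, Real.norm_eq_abs,
      abs_of_pos (Real.exp_pos _), dist_eq_norm]
  rw [hfactor]
  have hexp1 : Real.exp (-(lam k * τ)) ≤ 1 := by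
    rw [Real.exp_le_one_iff]
    nlinarith [hpos k]
  have hdk : dist ((u k : ℂ)) ((Circle.exp (lam k * x) : ℂ)) < ε := by
    have h1 : dist ((u k : ℂ)) ((Circle.exp (lam k * x) : ℂ))
        = dist (u k) (Circle.exp (lam k * x)) := (Subtype.dist_eq _ _).symm
    rw [h1]
    calc dist (u k) (Circle.exp (lam k * x))
        ≤ dist u (fun k => Circle.exp (lam k * x)) :=
          dist_le_pi_dist u (fun k => Circle.exp (lam k * x)) k
      _ < ε := hwd
  calc Real.exp (-(lam k * τ)) * dist ((u k : ℂ)) ((Circle.exp (lam k * x) : ℂ))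
      ≤ 1 * dist ((u k : ℂ)) ((Circle.exp (lam k * x) : ℂ)) :=
        mul_le_mul_of_nonneg_right hexp1 dist_nonneg
    _ < ε := by rwa [one_mul]
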